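/- arXiv:2507.14414 — 3 statements merged into one kernel-verified Lean document; each statement's English description precedes it below -/
import Mathlib

section
/- (Cauchy–Schwarz step: L⁴ of the average is bounded by L² of the dual function.) With notation as follows, if f_l is 1-bounded then (𝔼_{x ∈ 𝔽_p^D} |G(x)|²)² ≤ 𝔼_{x ∈ 𝔽_p^D} |F(x)|², where G(x) := 𝔼_{y ∈ 𝔽_p} θ(y) ∏_{i=1}^l f_i(x + P_i(y) v_i) ∏_{i=l+1}^k e_p(P_i(y) ξ_i) and F is the dual function F(x) := 𝔼_{y,y' ∈ 𝔽_p} θ(y) conj(θ(y')) [∏_{i=1}^{l−1} f_i(x + P_i(y)v_i − P_l(y')v_l) conj(f_i)(x + P_i(y')v_i − P_l(y')v_l)] f_l(x + P_l(y)v_l − P_l(y')v_l) ∏_{i=l+1}^k e_p((P_i(y) − P_i(y'))ξ_i). -/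
open Finset

/-- The additive character `e_p(x) = exp(2πi x / p)` on `𝔽_p`. -/
noncomputable def ep (p : ℕ) (x : ZMod p) : ℂ :=
  Complex.exp (2 * Real.pi * Complex.I * (x.val : ℂ) / p)

/-- The weighted multilinear averaging operator
`G_{l,k}^θ(x) = 𝔼_y θ(y) ∏_{i=1}^l f_i(x + P_i(y) v_i) ∏_{i=l+1}^k e_p(P_i(y) ξ_i)`. -/
noncomputable def Gop (p D k l : ℕ) [NeZero p] (θ : ZMod p → ℂ)
    (f : Fin k → (Fin D → ZMod p) → ℂ) (v : Fin k → Fin D → ZMod p)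
    (P : Fin k → ZMod p → ZMod p) (ξ : Fin k → ZMod p) (x : Fin D → ZMod p) : ℂ :=
  (∑ y : ZMod p, θ y
      * (∏ i ∈ Finset.univ.filter (fun i : Fin k => i.val < l), f i (x + P i y • v i))
      * ∏ i ∈ Finset.univ.filter (fun i : Fin k => l ≤ i.val), ep p (P i y * ξ i)) / p

/-- The dual function `F_{l,k}^θ` associated to the weighted averaging operator. -/
noncomputable def Fdual (p D k l : ℕ) [NeZero p] (hl : 1 ≤ l) (hlk : l ≤ k)
    (θ : ZMod p → ℂ) (f : Fin k → (Fin D → ZMod p) → ℂ) (v : Fin k → Fin D → ZMod p)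
    (P : Fin k → ZMod p → ZMod p) (ξ : Fin k → ZMod p) (x : Fin D → ZMod p) : ℂ :=
  let li : Fin k := ⟨l - 1, by omega⟩
  (∑ y : ZMod p, ∑ y' : ZMod p, θ y * star (θ y')
      * (∏ i ∈ Finset.univ.filter (fun i : Fin k => i.val + 1 < l),
          f i (x + P i y • v i - P li y' • v li)
            * star (f i (x + P i y' • v i - P li y' • v li)))
      * f li (x + P li y • v li - P li y' • v li)
      * ∏ i ∈ Finset.univ.filter (fun i : Fin k => l ≤ i.val),
          ep p ((P i y - P i y') * ξ i)) / ((p : ℂ) * p)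

lemma ep_mul_star (p : ℕ) [NeZero p] (a b : ZMod p) :
    ep p a * star (ep p b) = ep p (a - b) := by
  have hpne : (p : ℂ) ≠ 0 := by exact_mod_cast (NeZero.ne p)
  rw [show star (ep p b) = Complex.exp (-(2 * Real.pi * Complex.I * (b.val : ℂ) / p)) by
    rw [ep, Complex.star_def, ← Complex.exp_conj]
    congr 1
    simp only [map_div₀, map_mul, Complex.conj_I, Complex.conj_ofNat, Complex.conj_ofReal,
      Complex.conj_natCast]
    ring]
  rw [ep, ep, ← Complex.exp_add, Complex.exp_eq_exp_iff_exists_int]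
  have hp : (p : ℤ) ∣ ((a.val : ℤ) - b.val - ((a - b).val : ℤ)) := by
    have : (((a.val : ℤ) - b.val - ((a - b).val : ℤ) : ℤ) : ZMod p) = 0 := by
      push_cast [ZMod.natCast_val, ZMod.intCast_cast, ZMod.cast_id]
      ring
    exact (ZMod.intCast_zmod_eq_zero_iff_dvd _ p).mp this
  obtain ⟨m, hm⟩ := hp
  refine ⟨m, ?_⟩
  have key : (a.val : ℂ) - b.val = ((a - b).val : ℂ) + p * m := by
    have := congrArg (Int.cast : ℤ → ℂ) hm
    push_cast at this
    linear_combination this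
  linear_combination (2 * Real.pi * Complex.I / p) * key
    + (2 * Real.pi * Complex.I * m) * (mul_inv_cancel₀ hpne)

lemma core (p D k l : ℕ) [NeZero p] (hl : 1 ≤ l) (hlk : l ≤ k)
    (θ : ZMod p → ℂ) (f : Fin k → (Fin D → ZMod p) → ℂ) (v : Fin k → Fin D → ZMod p)
    (P : Fin k → ZMod p → ZMod p) (ξ : Fin k → ZMod p) (y y' : ZMod p) :
    ∑ x : Fin D → ZMod p,
      (θ y * (∏ i ∈ Finset.univ.filter (fun i : Fin k => i.val < l), f i (x + P i y • v i))
        * ∏ i ∈ Finset.univ.filter (fun i : Fin k => l ≤ i.val), ep p (P i y * ξ i))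
      * star (θ y' * (∏ i ∈ Finset.univ.filter (fun i : Fin k => i.val < l), f i (x + P i y' • v i))
        * ∏ i ∈ Finset.univ.filter (fun i : Fin k => l ≤ i.val), ep p (P i y' * ξ i))
    = ∑ x : Fin D → ZMod p,
      (θ y * star (θ y')
        * (∏ i ∈ Finset.univ.filter (fun i : Fin k => i.val + 1 < l),
            f i (x + P i y • v i - P ⟨l-1, by omega⟩ y' • v ⟨l-1, by omega⟩)
              * star (f i (x + P i y' • v i - P ⟨l-1, by omega⟩ y' • v ⟨l-1, by omega⟩)))
        * f ⟨l-1, by omega⟩ (x + P ⟨l-1, by omega⟩ y • v ⟨l-1, by omega⟩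
            - P ⟨l-1, by omega⟩ y' • v ⟨l-1, by omega⟩)
        * ∏ i ∈ Finset.univ.filter (fun i : Fin k => l ≤ i.val),
            ep p ((P i y - P i y') * ξ i))
      * star (f ⟨l-1, by omega⟩ x) := by
  set li : Fin k := ⟨l-1, by omega⟩ with hlidef
  have hli : li ∉ Finset.univ.filter (fun i : Fin k => i.val + 1 < l) := by
    simp [hlidef]; omega
  have hfilter : Finset.univ.filter (fun i : Fin k => i.val < l)
      = insert li (Finset.univ.filter (fun i : Fin k => i.val + 1 < l)) := by
    ext i
    simp [hlidef, Fin.ext_iff]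
    omega
  set c : Fin D → ZMod p := P li y' • v li with hc
  apply Fintype.sum_equiv (Equiv.addRight c)
  intro x
  simp only [Equiv.coe_addRight]
  have harg : ∀ w : Fin D → ZMod p, x + c + w - c = x + w := fun w => by abel
  have harg2 : x + c - c = x := by abel
  simp only [harg]
  have hep : ∀ i : Fin k, ep p ((P i y - P i y') * ξ i)
      = ep p (P i y * ξ i) * star (ep p (P i y' * ξ i)) := by
    intro i; rw [ep_mul_star]; congr 1; ring
  simp only [hep, Finset.prod_mul_distrib, star_mul', star_prod, hfilter,
    Finset.prod_insert hli]
  have : x + c = x + P li y' • v li := rfl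
  ring

lemma sum_swap3 {α β γ M : Type*} [Fintype α] [Fintype β] [Fintype γ] [AddCommMonoid M]
    (g : α → β → γ → M) :
    ∑ x : α, ∑ y : β, ∑ z : γ, g x y z = ∑ y : β, ∑ z : γ, ∑ x : α, g x y z := by
  rw [Finset.sum_comm]
  exact Finset.sum_congr rfl fun y _ => Finset.sum_comm

lemma sum_G_sq_eq (p D k l : ℕ) [NeZero p] (hl : 1 ≤ l) (hlk : l ≤ k)
    (θ : ZMod p → ℂ) (f : Fin k → (Fin D → ZMod p) → ℂ) (v : Fin k → Fin D → ZMod p)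
    (P : Fin k → ZMod p → ZMod p) (ξ : Fin k → ZMod p) :
    ∑ x : Fin D → ZMod p, Gop p D k l θ f v P ξ x * star (Gop p D k l θ f v P ξ x)
      = ∑ x : Fin D → ZMod p,
          Fdual p D k l hl hlk θ f v P ξ x * star (f ⟨l - 1, by omega⟩ x) := by
  have hG : ∀ x : Fin D → ZMod p,
      Gop p D k l θ f v P ξ x * star (Gop p D k l θ f v P ξ x)
      = (∑ y : ZMod p, ∑ y' : ZMod p,
          (θ y * (∏ i ∈ Finset.univ.filter (fun i : Fin k => i.val < l), f i (x + P i y • v i))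
            * ∏ i ∈ Finset.univ.filter (fun i : Fin k => l ≤ i.val), ep p (P i y * ξ i))
          * star (θ y' * (∏ i ∈ Finset.univ.filter (fun i : Fin k => i.val < l), f i (x + P i y' • v i))
            * ∏ i ∈ Finset.univ.filter (fun i : Fin k => l ≤ i.val), ep p (P i y' * ξ i)))
        / ((p : ℂ) * p) := by
    intro x
    unfold Gop
    rw [star_div₀, star_natCast, div_mul_div_comm, star_sum, Finset.sum_mul_sum]
  have hF : ∀ x : Fin D → ZMod p,
      Fdual p D k l hl hlk θ f v P ξ x * star (f ⟨l - 1, by omega⟩ x)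
      = (∑ y : ZMod p, ∑ y' : ZMod p,
          (θ y * star (θ y')
            * (∏ i ∈ Finset.univ.filter (fun i : Fin k => i.val + 1 < l),
                f i (x + P i y • v i - P ⟨l-1, by omega⟩ y' • v ⟨l-1, by omega⟩)
                  * star (f i (x + P i y' • v i - P ⟨l-1, by omega⟩ y' • v ⟨l-1, by omega⟩)))
            * f ⟨l-1, by omega⟩ (x + P ⟨l-1, by omega⟩ y • v ⟨l-1, by omega⟩
                - P ⟨l-1, by omega⟩ y' • v ⟨l-1, by omega⟩)
            * ∏ i ∈ Finset.univ.filter (fun i : Fin k => l ≤ i.val),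
                ep p ((P i y - P i y') * ξ i))
          * star (f ⟨l-1, by omega⟩ x)) / ((p : ℂ) * p) := by
    intro x
    unfold Fdual
    rw [div_mul_eq_mul_div, Finset.sum_mul]
    congr 1
    exact Finset.sum_congr rfl fun y _ => (Finset.sum_mul _ _ _)
  simp only [hG, hF]
  rw [← Finset.sum_div, ← Finset.sum_div]
  congr 1
  rw [sum_swap3 (α := Fin D → ZMod p) (β := ZMod p) (γ := ZMod p) (M := ℂ)]
  conv_rhs => rw [sum_swap3 (α := Fin D → ZMod p) (β := ZMod p) (γ := ZMod p) (M := ℂ)]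
  refine Finset.sum_congr rfl fun y _ => Finset.sum_congr rfl fun y' _ => ?_
  exact core p D k l hl hlk θ f v P ξ y y'

/-- Cauchy–Schwarz step: the square of the `L²`-mass of the weighted averaging operator
is bounded by the `L²`-mass of the dual function. -/
theorem l2_sq_le_dual_l2 (p : ℕ) [Fact p.Prime] (D k l : ℕ) (hD : 1 ≤ D)
    (hl : 1 ≤ l) (hlk : l ≤ k)
    (θ : ZMod p → ℂ) (f : Fin k → (Fin D → ZMod p) → ℂ)
    (hfl : ∀ x, ‖f ⟨l - 1, by omega⟩ x‖ ≤ 1)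
    (v : Fin k → Fin D → ZMod p)
    (Ppoly : Fin k → Polynomial (ZMod p)) (ξ : Fin k → ZMod p) :
    ((∑ x : Fin D → ZMod p,
        (‖Gop p D k l θ f v (fun i y => (Ppoly i).eval y) ξ x‖)^2) / (p : ℝ)^D)^2
      ≤ (∑ x : Fin D → ZMod p,
          (‖Fdual p D k l hl hlk θ f v (fun i y => (Ppoly i).eval y) ξ x‖)^2)
          / (p : ℝ)^D := by
  set Q : Fin k → ZMod p → ZMod p := fun i y => (Ppoly i).eval y with hQ
  set G : (Fin D → ZMod p) → ℂ := Gop p D k l θ f v Q ξ with hG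
  set F : (Fin D → ZMod p) → ℂ := Fdual p D k l hl hlk θ f v Q ξ with hF
  set li : Fin k := ⟨l - 1, by omega⟩ with hli
  set S : ℝ := ∑ x : Fin D → ZMod p, (‖G x‖)^2 with hSdef
  set T : ℝ := ∑ x : Fin D → ZMod p, (‖F x‖)^2 with hTdef
  set U : ℝ := ∑ x : Fin D → ZMod p, ‖F x‖ with hUdef
  set N : ℝ := (p : ℝ)^D with hN
  have hkey : ((S : ℝ) : ℂ) = ∑ x : Fin D → ZMod p, F x * star (f li x) := by
    rw [hSdef]
    push_cast
    rw [← sum_G_sq_eq p D k l hl hlk θ f v Q ξ]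
    exact Finset.sum_congr rfl fun x _ => by
      rw [Complex.star_def, Complex.mul_conj, Complex.normSq_eq_norm_sq]
      push_cast
      ring
  have hS0 : 0 ≤ S := Finset.sum_nonneg fun _ _ => sq_nonneg _
  have hT0 : 0 ≤ T := Finset.sum_nonneg fun _ _ => sq_nonneg _
  have hU0 : 0 ≤ U := Finset.sum_nonneg fun _ _ => norm_nonneg _
  have hSU : S ≤ U := by
    have h1 : S = ‖((S : ℝ) : ℂ)‖ := by
      rw [Complex.norm_of_nonneg hS0]
    rw [h1, hkey]
    calc ‖∑ x : Fin D → ZMod p, F x * star (f li x)‖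
        ≤ ∑ x : Fin D → ZMod p, ‖F x * star (f li x)‖ :=
          norm_sum_le _ _
      _ ≤ U := Finset.sum_le_sum fun x _ => by
          rw [norm_mul, Complex.star_def, Complex.norm_conj]
          exact mul_le_of_le_one_right (norm_nonneg _) (hfl x)
  have hcard : ((Finset.univ : Finset (Fin D → ZMod p)).card : ℝ) = N := by
    rw [Finset.card_univ, Fintype.card_fun, ZMod.card, Fintype.card_fin, hN]
    push_cast
    ring
  have hCS : U^2 ≤ N * T := by
    have h := Finset.sum_mul_sq_le_sq_mul_sq (Finset.univ : Finset (Fin D → ZMod p))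
      (fun _ => (1 : ℝ)) (fun x => ‖F x‖)
    simp only [one_mul, one_pow] at h
    rw [Finset.sum_const, nsmul_eq_mul, mul_one] at h
    calc U^2 ≤ (Finset.univ : Finset (Fin D → ZMod p)).card * T := h
      _ = N * T := by rw [hcard]
  have hNpos : 0 < N := by
    have : 0 < p := (Fact.out : p.Prime).pos
    positivity
  rw [div_pow, div_le_div_iff₀ (by positivity) hNpos]
  nlinarith [mul_self_le_mul_self hS0 hSU, hCS, hT0, hNpos.le, hS0, hU0]
end

section
/- (Fourier coefficient of the dual function factors through a shorter average.) Let F be the dual function F(x) := 𝔼_{y,y',n ∈ 𝔽_p} over the shifted variables as below, v_l ∈ 𝔽_p^D, ξ_l ∈ 𝔽_p. Then the directional Fourier coefficient satisfies F̂(x; v_l; ξ_l) = 𝔼_{n ∈ 𝔽_p} [ 𝔼_{y ∈ 𝔽_p} θ(y) e_p(−n ξ_l) ∏_{i=1}^{l} f_i(x + n v_l + P_i(y) v_i) ∏_{i=l+1}^k e_p(P_i(y) ξ_i) ] · [ 𝔼_{y' ∈ 𝔽_p} conj(θ)(y') ∏_{i=1}^{l−1} conj(f_i)(x + n v_l + P_i(y')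 v_i) ∏_{i=l}^k e_p(−P_i(y') ξ_i) ], where F(x) := 𝔼_{y,y' ∈ 𝔽_p} θ(y) conj(θ(y')) [∏_{i=1}^{l−1} f_i(x + P_i(y)v_i − P_l(y')v_l) conj(f_i)(x + P_i(y')v_i − P_l(y')v_l)] f_l(x + P_l(y)v_l − P_l(y')v_l) ∏_{i=l+1}^k e_p((P_i(y)−P_i(y'))ξ_i). -/
open Finset

lemma ep_add {p : ℕ} [NeZero p] (a b : ZMod p) : ep p (a + b) = ep p a * ep p b := by
  have key : ∀ x : ZMod p, ep p x = Complex.exp (2 * Real.pi * Complex.I / p) ^ x.val := by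
    intro x
    rw [ep, ← Complex.exp_nat_mul]
    congr 1
    ring
  have hp : (p:ℂ) ≠ 0 := Nat.cast_ne_zero.mpr (NeZero.ne p)
  have hζ : Complex.exp (2 * Real.pi * Complex.I / p) ^ p = 1 := by
    rw [← Complex.exp_nat_mul, show (p:ℂ) * (2 * Real.pi * Complex.I / p) = 2 * Real.pi * Complex.I by field_simp]
    exact Complex.exp_two_pi_mul_I
  rw [key, key, key, ← pow_add]
  have h2 : a.val + b.val = (a+b).val + p * ((a.val + b.val) / p) := by
    rw [ZMod.val_add]
    exact (Nat.mod_add_div _ _).symm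
  rw [h2, pow_add, pow_mul, hζ, one_pow, mul_one]


lemma lhs_reshape {α : Type*} [Fintype α] (g : α → α → α → ℂ) (e : α → ℂ) (c : ℂ) :
    ∑ n : α, (∑ y : α, ∑ y' : α, g n y y')/c * e n
      = (∑ y : α, ∑ y' : α, ∑ n : α, g n y y' * e n)/c := by
  simp only [div_mul_eq_mul_div, Finset.sum_mul, ← Finset.sum_div]
  congr 1
  rw [Finset.sum_comm]
  exact Finset.sum_congr rfl fun y _ => Finset.sum_comm

lemma rhs_reshape {α : Type*} [Fintype α] (a b : α → α → ℂ) (c : ℂ) :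
    ∑ n : α, (∑ y : α, a n y)/c * ((∑ y' : α, b n y')/c)
      = (∑ y : α, ∑ y' : α, ∑ n : α, a n y * b n y')/(c*c) := by
  simp only [div_mul_div_comm, Finset.sum_mul_sum, ← Finset.sum_div]
  congr 1
  rw [Finset.sum_comm]
  exact Finset.sum_congr rfl fun y _ => Finset.sum_comm

/-- The directional Fourier coefficient of the dual function along `v_l` factors as an
average over `n` of a product of two shorter averages. -/
theorem dual_fourier_coeff_factors (p : ℕ) [Fact p.Prime] (D k l : ℕ) (hD : 1 ≤ D)
    (hl : 2 ≤ l) (hlk : l ≤ k)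
    (θ : ZMod p → ℂ) (f : Fin k → (Fin D → ZMod p) → ℂ) (v : Fin k → Fin D → ZMod p)
    (P : Fin k → ZMod p → ZMod p) (ξ : Fin k → ZMod p) (x : Fin D → ZMod p) :
    (∑ n : ZMod p,
        Fdual p D k l (by omega) hlk θ f v P ξ (x + n • v ⟨l - 1, by omega⟩)
          * ep p (-(n * ξ ⟨l - 1, by omega⟩))) / p
      = (∑ n : ZMod p,
          ((∑ y : ZMod p, θ y * ep p (-(n * ξ ⟨l - 1, by omega⟩))
              * (∏ i ∈ Finset.univ.filter (fun i : Fin k => i.val < l),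
                  f i (x + n • v ⟨l - 1, by omega⟩ + P i y • v i))
              * ∏ i ∈ Finset.univ.filter (fun i : Fin k => l ≤ i.val),
                  ep p (P i y * ξ i)) / p)
          * ((∑ y' : ZMod p, star (θ y')
              * (∏ i ∈ Finset.univ.filter (fun i : Fin k => i.val + 1 < l),
                  star (f i (x + n • v ⟨l - 1, by omega⟩ + P i y' • v i)))
              * ∏ i ∈ Finset.univ.filter (fun i : Fin k => l ≤ i.val + 1),
                  ep p (-(P i y' * ξ i))) / p)) / p := by
  have hp : (p:ℂ) ≠ 0 := Nat.cast_ne_zero.mpr (NeZero.ne p)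
  set li : Fin k := ⟨l - 1, by omega⟩ with hli
  have hval : li.val = l - 1 := rfl
  simp only [Fdual]
  rw [lhs_reshape, rhs_reshape]
  rw [div_div, div_div]
  congr 1
  refine Finset.sum_congr rfl fun y _ => Finset.sum_congr rfl fun y' _ => ?_
  refine (Fintype.sum_equiv (Equiv.addRight (P li y')) _ _ ?_).symm
  intro n
  simp only [Equiv.coe_addRight]
  have harg : ∀ w : Fin D → ZMod p,
      x + (n + P li y') • v li + w - P li y' • v li = x + n • v li + w := by
    intro w; rw [add_smul]; abel
  have hmem1 : li ∉ Finset.univ.filter (fun i : Fin k => i.val + 1 < l) := by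
    simp only [Finset.mem_filter, Finset.mem_univ, true_and, hval]; omega
  have hmem2 : li ∉ Finset.univ.filter (fun i : Fin k => l ≤ i.val) := by
    simp only [Finset.mem_filter, Finset.mem_univ, true_and, hval]; omega
  have hsplit1 : Finset.univ.filter (fun i : Fin k => i.val < l)
      = insert li (Finset.univ.filter (fun i : Fin k => i.val + 1 < l)) := by
    ext i
    simp only [Finset.mem_filter, Finset.mem_univ, true_and, Finset.mem_insert, Fin.ext_iff, hval]
    omega
  have hsplit2 : Finset.univ.filter (fun i : Fin k => l ≤ i.val + 1)
      = insert li (Finset.univ.filter (fun i : Fin k => l ≤ i.val)) := by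
    ext i
    simp only [Finset.mem_filter, Finset.mem_univ, true_and, Finset.mem_insert, Fin.ext_iff, hval]
    omega
  have hep1 : ∀ i : Fin k, ep p ((P i y - P i y') * ξ i)
      = ep p (P i y * ξ i) * ep p (-(P i y' * ξ i)) := by
    intro i
    rw [show (P i y - P i y') * ξ i = P i y * ξ i + -(P i y' * ξ i) by ring, ep_add]
  have hep2 : ep p (-((n + P li y') * ξ li)) = ep p (-(n * ξ li)) * ep p (-(P li y' * ξ li)) := by
    rw [show -((n + P li y') * ξ li) = -(n * ξ li) + -(P li y' * ξ li) by ring, ep_add]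
  rw [hsplit1, hsplit2, Finset.prod_insert hmem1, Finset.prod_insert hmem2]
  simp only [← hli, harg, hep1, hep2, Finset.prod_mul_distrib]
  ring
end

section
/- (Diagonal Cauchy–Schwarz / box-norm completion step.) Let F : 𝔽_p^D → ℂ be 1-bounded, v ∈ 𝔽_p^D nonzero with 𝔽_p^D = ⟨v⟩^⊥ ⊕ ⟨v⟩, and let F'' : 𝔽_p^D → ℂ be 1-bounded. Then |𝔼_{h ∈ 𝔽_p^D} 𝔼_{x' ∈ ⟨v⟩^⊥} (𝔼_{m ∈ 𝔽_p} F''(x' + m v)) (𝔼_{n ∈ 𝔽_p} ΔₕF̄(x' + n v))|² ≤ 𝔼_{h, x ∈ 𝔽_p^D} 𝔼_{n ∈ 𝔽_p} Δ_{h, n v} F(x), where Δ_h F(x) := F(x) conj(F(x+h)) and Δ_{h, nv} F(x) := Δ_h F(x) · conj(Δ_h F(x + n v)); in particular the right-hand side equals ‖F‖⁴_{𝔽_p^D, ⟨v⟩}, the fourth power of the Gowers box norm along (𝔽_p^D, ⟨v⟩). -/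
open Finset
open scoped ComplexOrder

/-- The standard dot product with `v`, as a linear map. -/
def dotLin (p D : ℕ) (v : Fin D → ZMod p) : (Fin D → ZMod p) →ₗ[ZMod p] ZMod p where
  toFun w := ∑ i, w i * v i
  map_add' a b := by simp [add_mul, Finset.sum_add_distrib]
  map_smul' c a := by simp [Finset.mul_sum, mul_assoc]

private lemma trans_sum {G : Type*} [AddCommGroup G] [Fintype G] (x : G) (g : G → ℂ) :
    ∑ h : G, g (x + h) = ∑ y, g y :=
  Fintype.sum_equiv (Equiv.addLeft x) _ _ (fun _ => rfl)

private lemma mul_star_self (z : ℂ) : z * star z = ((Complex.normSq z : ℝ) : ℂ) :=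
  Complex.mul_conj z

private lemma factor_rhs {G : Type*} [AddCommGroup G] [Fintype G] (F : G → ℂ) (w : G) :
    ∑ h : G, ∑ x : G, F x * star (F (x + h)) * star (F (x + w)) * F (x + h + w)
      = ((Complex.normSq (∑ x, F x * star (F (x + w))) : ℝ) : ℂ) := by
  rw [Finset.sum_comm]
  calc ∑ x : G, ∑ h : G, F x * star (F (x + h)) * star (F (x + w)) * F (x + h + w)
      = ∑ x : G, (F x * star (F (x + w))) *
          ∑ h : G, (star (F (x + h)) * F ((x + h) + w)) := by
        refine Finset.sum_congr rfl fun x _ => ?_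
        rw [Finset.mul_sum]
        exact Finset.sum_congr rfl fun h _ => by ring
    _ = ∑ x : G, (F x * star (F (x + w))) * ∑ y, (star (F y) * F (y + w)) := by
        refine Finset.sum_congr rfl fun x _ => ?_
        rw [trans_sum x (fun y => star (F y) * F (y + w))]
    _ = (∑ x, F x * star (F (x + w))) * ∑ y, (star (F y) * F (y + w)) := by
        rw [← Finset.sum_mul]
    _ = _ := by
        rw [← mul_star_self (∑ x, F x * star (F (x + w))), star_sum]
        exact congrArg _ (Finset.sum_congr rfl fun y _ => by simp [mul_comm])

private lemma factor_lhs {G : Type*} [AddCommGroup G] [Fintype G] (F : G → ℂ) (w : G) :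
    ∑ h : G, ∑ x : G, star (F x) * F (x + h) * (F (x + w) * star (F (x + h + w)))
      = ((Complex.normSq (∑ x, F x * star (F (x + w))) : ℝ) : ℂ) := by
  rw [Finset.sum_comm]
  calc ∑ x : G, ∑ h : G, star (F x) * F (x + h) * (F (x + w) * star (F (x + h + w)))
      = ∑ x : G, (star (F x) * F (x + w)) *
          ∑ h : G, (F (x + h) * star (F ((x + h) + w))) := by
        refine Finset.sum_congr rfl fun x _ => ?_
        rw [Finset.mul_sum]
        exact Finset.sum_congr rfl fun h _ => by ring
    _ = ∑ x : G, (star (F x) * F (x + w)) * ∑ y, (F y * star (F (y + w))) := by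
        refine Finset.sum_congr rfl fun x _ => ?_
        rw [trans_sum x (fun y => F y * star (F (y + w)))]
    _ = (∑ y, (star (F y) * F (y + w))) * ∑ x, (F x * star (F (x + w))) := by
        rw [← Finset.sum_mul]
    _ = _ := by
        rw [← mul_star_self (∑ x, F x * star (F (x + w))), mul_comm, star_sum]
        refine congrArg _ ?_
        exact (Finset.sum_congr rfl fun y _ => by simp [mul_comm])

set_option maxHeartbeats 2000000 in
/-- Diagonal Cauchy–Schwarz / box-norm completion step: the square of the pairing of the
`v`-direction averages of a 1-bounded `F''` against the `v`-direction averages of the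
multiplicative derivatives of `conj F` is bounded by the fourth power of the Gowers box
norm of `F` along `(𝔽_p^D, ⟨v⟩)`. -/
theorem box_norm_completion (p : ℕ) [Fact p.Prime] (D : ℕ) (hD : 1 ≤ D)
    (F : (Fin D → ZMod p) → ℂ) (hF : ∀ x, norm (F x) ≤ 1)
    (F'' : (Fin D → ZMod p) → ℂ) (hF'' : ∀ x, norm (F'' x) ≤ 1)
    (v : Fin D → ZMod p) (hv : v ≠ 0)
    (hcompl : IsCompl (LinearMap.ker (dotLin p D v)) (Submodule.span (ZMod p) {v})) :
    (((norm ((∑ h : Fin D → ZMod p,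
        (∑ x' : {w : Fin D → ZMod p // ∑ i, w i * v i = 0},
            ((∑ m : ZMod p, F'' (x'.val + m • v)) / p)
              * ((∑ n : ZMod p, star (F (x'.val + n • v)) * F (x'.val + n • v + h)) / p))
          / (Fintype.card {w : Fin D → ZMod p // ∑ i, w i * v i = 0})) / (p : ℂ)^D))^2 : ℝ) : ℂ)
      ≤ (∑ h : Fin D → ZMod p, ∑ x : Fin D → ZMod p, ∑ n : ZMod p,
          F x * star (F (x + h)) * star (F (x + n • v)) * F (x + h + n • v))
          / ((p : ℂ)^D * (p : ℂ)^D * p) := by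
  classical
  have hp : 0 < p := (Fact.out : p.Prime).pos
  have hpR : (0:ℝ) < (p:ℝ) := by exact_mod_cast hp
  -- bijection S × ZMod p ≃ full space
  have hmem : ∀ w : Fin D → ZMod p, w ∈ LinearMap.ker (dotLin p D v) ↔ ∑ i, w i * v i = 0 := by
    intro w; simp [LinearMap.mem_ker, dotLin]
  have hbij : Function.Bijective
      (fun z : {w : Fin D → ZMod p // ∑ i, w i * v i = 0} × ZMod p => z.1.val + z.2 • v) := by
    constructor
    · rintro ⟨⟨a, ha⟩, m⟩ ⟨⟨b, hb⟩, n⟩ h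
      simp only at h
      have h1 : a - b = (n - m) • v := by
        rw [sub_smul]
        exact sub_eq_sub_iff_add_eq_add.mpr (h.trans (add_comm _ _))
      have hker : a - b ∈ LinearMap.ker (dotLin p D v) :=
        Submodule.sub_mem _ ((hmem a).2 ha) ((hmem b).2 hb)
      have hspan : a - b ∈ Submodule.span (ZMod p) {v} := by
        rw [h1]; exact Submodule.smul_mem _ _ (Submodule.mem_span_singleton_self v)
      have h0 : a - b = 0 := Submodule.disjoint_def.mp hcompl.disjoint _ hker hspan
      have hab : a = b := sub_eq_zero.mp h0
      have h2 : (n - m) • v = 0 := by rw [← h1, h0]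
      rcases smul_eq_zero.mp h2 with h' | h'
      · have hnm : n = m := sub_eq_zero.mp h'
        subst hab; subst hnm; rfl
      · exact absurd h' hv
    · intro x
      have hx : x ∈ LinearMap.ker (dotLin p D v) ⊔ Submodule.span (ZMod p) {v} := by
        rw [hcompl.sup_eq_top]; trivial
      obtain ⟨a, ha, b, hb, hab⟩ := Submodule.mem_sup.mp hx
      obtain ⟨c, rfl⟩ := Submodule.mem_span_singleton.mp hb
      exact ⟨⟨⟨a, (hmem a).1 ha⟩, c⟩, hab⟩
  have hsum : ∀ g : (Fin D → ZMod p) → ℂ,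
      ∑ x' : {w : Fin D → ZMod p // ∑ i, w i * v i = 0}, ∑ n : ZMod p, g (x'.val + n • v)
        = ∑ x, g x := by
    intro g
    exact (Fintype.sum_prod_type
        (f := fun z : {w : Fin D → ZMod p // ∑ i, w i * v i = 0} × ZMod p =>
          g (z.1.val + z.2 • v))).symm.trans
      (Fintype.sum_equiv (Equiv.ofBijective _ hbij) _ _ (fun z => rfl))
  have hcardV : Fintype.card (Fin D → ZMod p) = p ^ D := by
    simp [Fintype.card_fun, ZMod.card]
  have hcard : Fintype.card {w : Fin D → ZMod p // ∑ i, w i * v i = 0} * p = p ^ D := by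
    have h1 := Fintype.card_of_bijective hbij
    simpa [Fintype.card_prod, ZMod.card, hcardV] using h1
  have htransZ : ∀ (n : ZMod p) (g : ZMod p → ℂ), ∑ k : ZMod p, g (n + k) = ∑ m, g m :=
    fun n g => Fintype.sum_equiv (Equiv.addLeft n) _ _ (fun _ => rfl)
  -- RHS identity
  have hRHS : (∑ h : Fin D → ZMod p, ∑ x : Fin D → ZMod p, ∑ n : ZMod p,
      F x * star (F (x + h)) * star (F (x + n • v)) * F (x + h + n • v))
      = ((∑ k : ZMod p, Complex.normSq (∑ x, F x * star (F (x + k • v))) : ℝ) : ℂ) := by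
    calc (∑ h : Fin D → ZMod p, ∑ x : Fin D → ZMod p, ∑ n : ZMod p,
          F x * star (F (x + h)) * star (F (x + n • v)) * F (x + h + n • v))
        = ∑ h : Fin D → ZMod p, ∑ n : ZMod p, ∑ x : Fin D → ZMod p,
            F x * star (F (x + h)) * star (F (x + n • v)) * F (x + h + n • v) :=
          Finset.sum_congr rfl fun h _ => Finset.sum_comm
      _ = ∑ n : ZMod p, ∑ h : Fin D → ZMod p, ∑ x : Fin D → ZMod p,
            F x * star (F (x + h)) * star (F (x + n • v)) * F (x + h + n • v) :=
          Finset.sum_comm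
      _ = ∑ n : ZMod p, ((Complex.normSq (∑ x, F x * star (F (x + n • v))) : ℝ) : ℂ) :=
          Finset.sum_congr rfl fun n _ => factor_rhs F (n • v)
      _ = _ := by push_cast; rfl
  -- the key expansion of the off-diagonal square
  have hkey : ∑ h : Fin D → ZMod p, ∑ x' : {w : Fin D → ZMod p // ∑ i, w i * v i = 0},
        ((Complex.normSq (∑ n : ZMod p,
            star (F (x'.val + n • v)) * F (x'.val + n • v + h)) : ℝ) : ℂ)
      = ∑ k : ZMod p, ((Complex.normSq (∑ x, F x * star (F (x + k • v))) : ℝ) : ℂ) := by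
    have hWsq : ∀ (h : Fin D → ZMod p) (x' : {w : Fin D → ZMod p // ∑ i, w i * v i = 0}),
        ((Complex.normSq (∑ n : ZMod p,
            star (F (x'.val + n • v)) * F (x'.val + n • v + h)) : ℝ) : ℂ)
        = ∑ n : ZMod p, ∑ k : ZMod p,
            (star (F (x'.val + n • v)) * F (x'.val + n • v + h)) *
              star (star (F (x'.val + (n + k) • v)) * F (x'.val + (n + k) • v + h)) := by
      intro h x'
      rw [← mul_star_self, star_sum, Finset.sum_mul_sum]
      refine Finset.sum_congr rfl fun n _ => ?_
      exact (htransZ n (fun m => (star (F (x'.val + n • v)) * F (x'.val + n • v + h)) *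
        star (star (F (x'.val + m • v)) * F (x'.val + m • v + h)))).symm
    calc ∑ h : Fin D → ZMod p, ∑ x' : {w : Fin D → ZMod p // ∑ i, w i * v i = 0},
          ((Complex.normSq (∑ n : ZMod p,
              star (F (x'.val + n • v)) * F (x'.val + n • v + h)) : ℝ) : ℂ)
        = ∑ h : Fin D → ZMod p, ∑ x' : {w : Fin D → ZMod p // ∑ i, w i * v i = 0},
            ∑ k : ZMod p, ∑ n : ZMod p,
            (star (F (x'.val + n • v)) * F (x'.val + n • v + h)) *
              star (star (F (x'.val + (n + k) • v)) * F (x'.val + (n + k) • v + h)) := by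
          refine Finset.sum_congr rfl fun h _ => Finset.sum_congr rfl fun x' _ => ?_
          rw [hWsq h x']
          exact Finset.sum_comm
      _ = ∑ k : ZMod p, ∑ h : Fin D → ZMod p,
            ∑ x' : {w : Fin D → ZMod p // ∑ i, w i * v i = 0}, ∑ n : ZMod p,
            (star (F (x'.val + n • v)) * F (x'.val + n • v + h)) *
              star (star (F (x'.val + (n + k) • v)) * F (x'.val + (n + k) • v + h)) :=
          (Finset.sum_congr rfl fun h _ => Finset.sum_comm).trans Finset.sum_comm
      _ = ∑ k : ZMod p, ∑ h : Fin D → ZMod p, ∑ x : Fin D → ZMod p,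
            star (F x) * F (x + h) * (F (x + k • v) * star (F (x + h + k • v))) := by
          refine Finset.sum_congr rfl fun k _ => Finset.sum_congr rfl fun h _ => ?_
          have hterm : ∀ (x' : {w : Fin D → ZMod p // ∑ i, w i * v i = 0}) (n : ZMod p),
              (star (F (x'.val + n • v)) * F (x'.val + n • v + h)) *
                star (star (F (x'.val + (n + k) • v)) * F (x'.val + (n + k) • v + h))
              = (fun x => star (F x) * F (x + h) * (F (x + k • v) * star (F (x + h + k • v))))
                  (x'.val + n • v) := by
            intro x' n
            have e1 : x'.val + (n + k) • v = x'.val + n • v + k • v := by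
              rw [add_smul, add_assoc]
            have e2 : x'.val + n • v + k • v + h = x'.val + n • v + h + k • v := by
              rw [add_right_comm]
            rw [e1, e2]
            simp only [star_mul, star_star]
            ring
          calc ∑ x' : {w : Fin D → ZMod p // ∑ i, w i * v i = 0}, ∑ n : ZMod p,
                (star (F (x'.val + n • v)) * F (x'.val + n • v + h)) *
                  star (star (F (x'.val + (n + k) • v)) * F (x'.val + (n + k) • v + h))
              = ∑ x' : {w : Fin D → ZMod p // ∑ i, w i * v i = 0}, ∑ n : ZMod p,
                (fun x => star (F x) * F (x + h) * (F (x + k • v) * star (F (x + h + k • v))))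
                  (x'.val + n • v) :=
                Finset.sum_congr rfl fun x' _ => Finset.sum_congr rfl fun n _ => hterm x' n
            _ = _ := hsum
                  (fun x => star (F x) * F (x + h) * (F (x + k • v) * star (F (x + h + k • v))))
      _ = _ := Finset.sum_congr rfl fun k _ => factor_lhs F (k • v)
  -- reduce to a real inequality
  rw [hRHS]
  have hden : ((p : ℂ)^D * (p : ℂ)^D * (p:ℂ)) = ((((p:ℝ)^D * (p:ℝ)^D * (p:ℝ)) : ℝ) : ℂ) := by
    push_cast; ring
  rw [hden, ← Complex.ofReal_div, Complex.real_le_real]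
  -- notation
  set K : ℝ := (Fintype.card {w : Fin D → ZMod p // ∑ i, w i * v i = 0} : ℝ) with hKdef
  have hK0 : (0:ℝ) < K := by
    have hpos : 0 < Fintype.card {w : Fin D → ZMod p // ∑ i, w i * v i = 0} :=
      Fintype.card_pos_iff.mpr ⟨⟨0, by simp⟩⟩
    rw [hKdef]
    exact_mod_cast hpos
  have hKN : K * p = (p:ℝ)^D := by rw [hKdef]; exact_mod_cast hcard
  have hN0 : (0:ℝ) < (p:ℝ)^D := pow_pos hpR D
  set R : ℝ := ∑ k : ZMod p, Complex.normSq (∑ x, F x * star (F (x + k • v))) with hRdef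
  have hR0 : 0 ≤ R := Finset.sum_nonneg fun k _ => Complex.normSq_nonneg _
  set SB : ℝ := ∑ h : Fin D → ZMod p, ∑ x' : {w : Fin D → ZMod p // ∑ i, w i * v i = 0},
      norm (∑ n : ZMod p, star (F (x'.val + n • v)) * F (x'.val + n • v + h)) with hSBdef
  have hSB0 : 0 ≤ SB := Finset.sum_nonneg fun h _ => Finset.sum_nonneg fun x' _ => by positivity
  -- |average of F''| ≤ 1
  have habsA : ∀ x' : {w : Fin D → ZMod p // ∑ i, w i * v i = 0},
      norm ((∑ m : ZMod p, F'' (x'.val + m • v)) / p) ≤ 1 := by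
    intro x'
    rw [norm_div, Complex.norm_natCast, div_le_one hpR]
    calc norm (∑ m : ZMod p, F'' (x'.val + m • v))
        ≤ ∑ m : ZMod p, norm (F'' (x'.val + m • v)) := norm_sum_le _ _
      _ ≤ ∑ _m : ZMod p, (1:ℝ) := Finset.sum_le_sum fun m _ => hF'' _
      _ = p := by simp [ZMod.card]
  -- step A : triangle inequality bound
  have h1 : norm (∑ h : Fin D → ZMod p,
      (∑ x' : {w : Fin D → ZMod p // ∑ i, w i * v i = 0},
        ((∑ m : ZMod p, F'' (x'.val + m • v)) / p)
          * ((∑ n : ZMod p, star (F (x'.val + n • v)) * F (x'.val + n • v + h)) / p)))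
      ≤ SB / p := by
    rw [hSBdef, Finset.sum_div]
    refine (norm_sum_le _ _).trans (Finset.sum_le_sum fun h _ => ?_)
    rw [Finset.sum_div]
    refine (norm_sum_le _ _).trans (Finset.sum_le_sum fun x' _ => ?_)
    rw [norm_mul]
    have hWd : norm ((∑ n : ZMod p, star (F (x'.val + n • v)) * F (x'.val + n • v + h)) / p)
        = norm (∑ n : ZMod p, star (F (x'.val + n • v)) * F (x'.val + n • v + h)) / p := by
      rw [norm_div, Complex.norm_natCast]
    rw [hWd]
    exact mul_le_of_le_one_left (by positivity) (habsA x')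
  have hXbound : norm ((∑ h : Fin D → ZMod p,
      (∑ x' : {w : Fin D → ZMod p // ∑ i, w i * v i = 0},
          ((∑ m : ZMod p, F'' (x'.val + m • v)) / p)
            * ((∑ n : ZMod p, star (F (x'.val + n • v)) * F (x'.val + n • v + h)) / p))
        / (Fintype.card {w : Fin D → ZMod p // ∑ i, w i * v i = 0})) / (p : ℂ)^D)
      ≤ SB / ((p:ℝ) * K * (p:ℝ)^D) := by
    rw [norm_div, norm_pow, Complex.norm_natCast, ← Finset.sum_div, norm_div, Complex.norm_natCast,
      ← hKdef, div_div]
    calc norm (∑ h : Fin D → ZMod p,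
          (∑ x' : {w : Fin D → ZMod p // ∑ i, w i * v i = 0},
            ((∑ m : ZMod p, F'' (x'.val + m • v)) / p)
              * ((∑ n : ZMod p, star (F (x'.val + n • v)) * F (x'.val + n • v + h)) / p)))
            / (K * (p:ℝ)^D)
        ≤ (SB / p) / (K * (p:ℝ)^D) := by gcongr
      _ = SB / ((p:ℝ) * K * (p:ℝ)^D) := by ring
  -- step B : Cauchy-Schwarz
  have hkeyR : (∑ h : Fin D → ZMod p, ∑ x' : {w : Fin D → ZMod p // ∑ i, w i * v i = 0},
      Complex.normSq (∑ n : ZMod p, star (F (x'.val + n • v)) * F (x'.val + n • v + h))) = R := by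
    rw [hRdef]
    exact_mod_cast hkey
  have hCS : SB^2 ≤ ((p:ℝ)^D * K) * R := by
    have hSBprod : SB = ∑ z : (Fin D → ZMod p) × {w : Fin D → ZMod p // ∑ i, w i * v i = 0},
        norm (∑ n : ZMod p, star (F (z.2.val + n • v)) * F (z.2.val + n • v + z.1)) := by
      rw [hSBdef]
      exact (Fintype.sum_prod_type
        (f := fun z : (Fin D → ZMod p) × {w : Fin D → ZMod p // ∑ i, w i * v i = 0} =>
          norm (∑ n : ZMod p, star (F (z.2.val + n • v)) * F (z.2.val + n • v + z.1)))).symm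
    rw [hSBprod]
    calc (∑ z : (Fin D → ZMod p) × {w : Fin D → ZMod p // ∑ i, w i * v i = 0},
          norm (∑ n : ZMod p, star (F (z.2.val + n • v)) * F (z.2.val + n • v + z.1)))^2
        ≤ (Finset.univ.card : ℝ) * ∑ z : (Fin D → ZMod p) ×
            {w : Fin D → ZMod p // ∑ i, w i * v i = 0},
            (norm (∑ n : ZMod p, star (F (z.2.val + n • v)) * F (z.2.val + n • v + z.1)))^2 := by
          have := sq_sum_le_card_mul_sum_sq
            (s := (Finset.univ : Finset ((Fin D → ZMod p) ×
              {w : Fin D → ZMod p // ∑ i, w i * v i = 0})))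
            (f := fun z => norm
              (∑ n : ZMod p, star (F (z.2.val + n • v)) * F (z.2.val + n • v + z.1)))
          exact_mod_cast this
      _ = ((p:ℝ)^D * K) * R := by
          rw [Finset.card_univ, Fintype.card_prod, hcardV]
          rw [← hkeyR]
          have : (∑ z : (Fin D → ZMod p) × {w : Fin D → ZMod p // ∑ i, w i * v i = 0},
              (norm (∑ n : ZMod p, star (F (z.2.val + n • v)) * F (z.2.val + n • v + z.1)))^2)
              = ∑ h : Fin D → ZMod p, ∑ x' : {w : Fin D → ZMod p // ∑ i, w i * v i = 0},
                Complex.normSq (∑ n : ZMod p, star (F (x'.val + n • v)) * F (x'.val + n • v + h)) := by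
            rw [Fintype.sum_prod_type]
            exact Finset.sum_congr rfl fun h _ => Finset.sum_congr rfl fun x' _ => Complex.sq_norm _
          rw [this]
          push_cast [hKdef]
          ring
  -- final assembly
  calc (norm ((∑ h : Fin D → ZMod p,
      (∑ x' : {w : Fin D → ZMod p // ∑ i, w i * v i = 0},
          ((∑ m : ZMod p, F'' (x'.val + m • v)) / p)
            * ((∑ n : ZMod p, star (F (x'.val + n • v)) * F (x'.val + n • v + h)) / p))
        / (Fintype.card {w : Fin D → ZMod p // ∑ i, w i * v i = 0})) / (p : ℂ)^D))^2
      ≤ (SB / ((p:ℝ) * K * (p:ℝ)^D))^2 := pow_le_pow_left₀ (by positivity) hXbound 2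
    _ = SB^2 / ((p:ℝ) * K * (p:ℝ)^D)^2 := div_pow _ _ _
    _ ≤ (((p:ℝ)^D * K) * R) / ((p:ℝ) * K * (p:ℝ)^D)^2 := by gcongr
    _ = R / ((p:ℝ)^D * (p:ℝ)^D * p) := by
        rw [← hKN]
        have hKne : K ≠ 0 := ne_of_gt hK0
        have hpne : (p:ℝ) ≠ 0 := ne_of_gt hpR
        field_simp
end
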